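/- Let 0 < p ≤ 1/2 and 1 ≤ i ≤ n-1 with i(n-i)p²(1-p)^{-2} ≤ 1/2. Then p^{(i)} = ∑_{ℓ=1}^{min(i,n-i)} C(i,ℓ)C(n-i,ℓ)p^{2ℓ}(1-p)^{n-2ℓ} ≤ i(n-i)p²(1-p)^{n-2}·(1 + 2i(n-i)p²/(1-p)²). -/

import Mathlib

/-- Upper bound on the probability `p^{(i)}` that a standard bit mutation of a
string with `i` ones produces a different string with exactly `i` ones,
assuming `i(n-i)p²/(1-p)² ≤ 1/2`:
`p^{(i)} ≤ i(n-i) p² (1-p)^{n-2} (1 + 2i(n-i)p²/(1-p)²)`. -/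
theorem neutral_mutation_upper_bound (p : ℝ) (hp0 : 0 < p) (hp : p ≤ 1 / 2)
    (i n : ℕ) (hi : 1 ≤ i) (hin : i ≤ n - 1)
    (hx : (i : ℝ) * ((n : ℝ) - i) * p ^ 2 / (1 - p) ^ 2 ≤ 1 / 2) :
    (∑ ℓ ∈ Finset.Icc 1 (min i (n - i)),
        (Nat.choose i ℓ : ℝ) * Nat.choose (n - i) ℓ * p ^ (2 * ℓ) * (1 - p) ^ (n - 2 * ℓ))
      ≤ (i : ℝ) * ((n : ℝ) - i) * p ^ 2 * (1 - p) ^ (n - 2)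
          * (1 + 2 * (i : ℝ) * ((n : ℝ) - i) * p ^ 2 / (1 - p) ^ 2) := by
  have hq0 : (0:ℝ) < 1 - p := by linarith
  have hn2 : 2 ≤ n := by omega
  have hin' : i ≤ n := by omega
  have hcast : ((n - i : ℕ) : ℝ) = (n : ℝ) - i := by
    push_cast [hin']; ring
  set q : ℝ := 1 - p with hqdef
  set x : ℝ := (i : ℝ) * ((n : ℝ) - i) * p ^ 2 / q ^ 2 with hxdef
  have hB0 : (0:ℝ) ≤ (n : ℝ) - i := by rw [← hcast]; positivity
  have hx0 : 0 ≤ x := by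
    rw [hxdef]
    have : (0:ℝ) ≤ (i : ℝ) * ((n : ℝ) - i) * p ^ 2 := by positivity
    positivity
  clear_value q x
  have hA0 : (0:ℝ) ≤ (i : ℝ) * ((n : ℝ) - i) * p ^ 2 * q ^ (n - 2) := by positivity
  -- pointwise bound
  have hterm : ∀ ℓ ∈ Finset.Icc 1 (min i (n - i)),
      (Nat.choose i ℓ : ℝ) * Nat.choose (n - i) ℓ * p ^ (2 * ℓ) * q ^ (n - 2 * ℓ)
        ≤ (i : ℝ) * ((n : ℝ) - i) * p ^ 2 * q ^ (n - 2) * x ^ (ℓ - 1) := by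
    intro ℓ hℓ
    obtain ⟨h1, h2⟩ := Finset.mem_Icc.mp hℓ
    have hℓi : ℓ ≤ i := le_trans h2 (min_le_left _ _)
    have hℓni : ℓ ≤ n - i := le_trans h2 (min_le_right _ _)
    have h2ln : 2 * ℓ ≤ n := by omega
    have hc1 : (Nat.choose i ℓ : ℝ) ≤ (i : ℝ) ^ ℓ := by
      exact_mod_cast Nat.cast_le.mpr (Nat.choose_le_pow i ℓ)
    have hc2 : (Nat.choose (n - i) ℓ : ℝ) ≤ ((n : ℝ) - i) ^ ℓ := by
      rw [← hcast]
      exact_mod_cast Nat.cast_le.mpr (Nat.choose_le_pow (n - i) ℓ)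
    have hstep : (Nat.choose i ℓ : ℝ) * Nat.choose (n - i) ℓ * p ^ (2 * ℓ) * q ^ (n - 2 * ℓ)
        ≤ (i : ℝ) ^ ℓ * ((n : ℝ) - i) ^ ℓ * p ^ (2 * ℓ) * q ^ (n - 2 * ℓ) := by
      have hpq : (0:ℝ) ≤ p ^ (2 * ℓ) * q ^ (n - 2 * ℓ) := by positivity
      have := mul_le_mul (mul_le_mul hc1 hc2 (by positivity) (by positivity))
        (le_refl (p ^ (2 * ℓ) * q ^ (n - 2 * ℓ))) hpq
        (by positivity)
      calc (Nat.choose i ℓ : ℝ) * Nat.choose (n - i) ℓ * p ^ (2 * ℓ) * q ^ (n - 2 * ℓ)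
          = (Nat.choose i ℓ : ℝ) * Nat.choose (n - i) ℓ * (p ^ (2 * ℓ) * q ^ (n - 2 * ℓ)) := by ring
        _ ≤ (i : ℝ) ^ ℓ * ((n : ℝ) - i) ^ ℓ * (p ^ (2 * ℓ) * q ^ (n - 2 * ℓ)) := this
        _ = (i : ℝ) ^ ℓ * ((n : ℝ) - i) ^ ℓ * p ^ (2 * ℓ) * q ^ (n - 2 * ℓ) := by ring
    refine hstep.trans (le_of_eq ?_)
    obtain ⟨j, rfl⟩ : ∃ j, ℓ = j + 1 := ⟨ℓ - 1, by omega⟩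
    have e1 : n - 2 = (n - 2 * (j + 1)) + 2 * j := by omega
    have e2 : 2 * (j + 1) = 2 * j + 2 := by omega
    have e3 : (j + 1) - 1 = j := by omega
    have hq2 : ((q : ℝ) ^ 2) ^ j ≠ 0 := by positivity
    have hxj : x ^ j = ((i : ℝ) * ((n : ℝ) - i) * p ^ 2) ^ j / ((q : ℝ) ^ 2) ^ j := by
      rw [hxdef, div_pow]
    rw [e1, e2, e3, hxj, pow_add, pow_add, pow_succ, pow_succ, ← mul_div_assoc, eq_div_iff hq2, mul_pow, mul_pow, ← pow_mul, ← pow_mul]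
    ring
  have hsum1 := Finset.sum_le_sum hterm
  set M := min i (n - i) with hM
  have hsum2 : (∑ ℓ ∈ Finset.Icc 1 M, (i : ℝ) * ((n : ℝ) - i) * p ^ 2 * q ^ (n - 2) * x ^ (ℓ - 1))
      = (i : ℝ) * ((n : ℝ) - i) * p ^ 2 * q ^ (n - 2) * ∑ j ∈ Finset.range M, x ^ j := by
    rw [Finset.mul_sum, show Finset.Icc 1 M = Finset.Ico 1 (M + 1) by
      rw [Finset.Ico_add_one_right_eq_Icc], Finset.sum_Ico_eq_sum_range]
    simp
  have hgeom : (∑ j ∈ Finset.range M, x ^ j) ≤ 1 + 2 * x := by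
    have h1 := geom_sum_mul x M
    have h2 : (0:ℝ) ≤ x ^ M := by positivity
    have h3 : x ≤ 1 / 2 := hx
    nlinarith [Finset.sum_nonneg (fun j (_ : j ∈ Finset.range M) => pow_nonneg hx0 j)]
  have hfinal : (∑ ℓ ∈ Finset.Icc 1 M,
      (Nat.choose i ℓ : ℝ) * Nat.choose (n - i) ℓ * p ^ (2 * ℓ) * q ^ (n - 2 * ℓ))
      ≤ (i : ℝ) * ((n : ℝ) - i) * p ^ 2 * q ^ (n - 2) * (1 + 2 * x) := by
    refine hsum1.trans ?_
    rw [hsum2]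
    exact mul_le_mul_of_nonneg_left hgeom hA0
  refine hfinal.trans (le_of_eq ?_)
  rw [hxdef]
  ring
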